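/- The intersection V of all cones of a quasi-fan Δ is a linear subspace of N_ℝ, and it is a face of every cone of Δ. -/

import Mathlib

open Module

/-- The convex cone generated by a finite set of vectors: all nonnegative
linear combinations. -/
def coneHull {V : Type*} [AddCommGroup V] [Module ℝ V] (S : Finset V) : Set V :=
  {x | ∃ c : V → ℝ, (∀ v, 0 ≤ c v) ∧ x = ∑ v ∈ S, c v • v}

/-- A rational convex polyhedral cone in `ℝⁿ`: generated by finitely many
lattice vectors. -/
def IsRatPolyCone {n : ℕ} (σ : Set (Fin n → ℝ)) : Prop :=
  ∃ S : Finset (Fin n → ℤ), σ = coneHull (S.image fun z => fun i => (z i : ℝ))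

/-- `F` is a face of the cone `σ`, cut out by a supporting linear form
(`σ` itself is a face, via the zero form). -/
def IsFace {V : Type*} [AddCommGroup V] [Module ℝ V] (F σ : Set V) : Prop :=
  F ⊆ σ ∧ ∃ u : Module.Dual ℝ V, (∀ x ∈ σ, 0 ≤ u x) ∧ F = {x ∈ σ | u x = 0}

/-- A quasi-fan in `ℤⁿ`: a finite nonempty set of rational convex polyhedral
cones, closed under taking faces, such that any two members intersect in a
common face. -/
def IsQuasiFan {n : ℕ} (Δ : Set (Set (Fin n → ℝ))) : Prop :=
  Δ.Finite ∧ Δ.Nonempty ∧ (∀ σ ∈ Δ, IsRatPolyCone σ) ∧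
    (∀ σ ∈ Δ, ∀ F, IsFace F σ → F ∈ Δ) ∧
    (∀ σ ∈ Δ, ∀ τ ∈ Δ, IsFace (σ ∩ τ) σ)

section ConeHullLemmas

variable {E : Type*} [AddCommGroup E] [Module ℝ E]

lemma coneHull.zero_mem (S : Finset E) : (0 : E) ∈ coneHull S :=
  ⟨0, fun _ => le_refl 0, by simp⟩

lemma coneHull.mem_of_mem {S : Finset E} {v : E} (hv : v ∈ S) : v ∈ coneHull S := by
  classical
  refine ⟨fun w => if w = v then 1 else 0, fun w => by dsimp only; split <;> norm_num, ?_⟩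
  simp [ite_smul, Finset.sum_ite_eq', hv]

lemma coneHull.add_mem {S : Finset E} {x y : E} (hx : x ∈ coneHull S)
    (hy : y ∈ coneHull S) : x + y ∈ coneHull S := by
  obtain ⟨c, hc, rfl⟩ := hx
  obtain ⟨d, hd, rfl⟩ := hy
  exact ⟨c + d, fun v => add_nonneg (hc v) (hd v), by
    simp [add_smul, Finset.sum_add_distrib]⟩

lemma coneHull.smul_mem {S : Finset E} {a : ℝ} (ha : 0 ≤ a) {x : E}
    (hx : x ∈ coneHull S) : a • x ∈ coneHull S := by
  obtain ⟨c, hc, rfl⟩ := hx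
  exact ⟨fun v => a * c v, fun v => mul_nonneg ha (hc v), by
    rw [Finset.smul_sum]; simp [smul_smul]⟩

end ConeHullLemmas

/-- The intersection of all cones of a quasi-fan is a linear subspace of `ℝⁿ`
and is a face of every cone of the quasi-fan. -/
theorem minimalCone_isSubspace_and_face {n : ℕ} (Δ : Set (Set (Fin n → ℝ)))
    (hΔ : IsQuasiFan Δ) :
    (∃ W : Submodule ℝ (Fin n → ℝ), (W : Set (Fin n → ℝ)) = ⋂ σ ∈ Δ, σ) ∧
    ∀ σ ∈ Δ, IsFace (⋂ τ ∈ Δ, τ) σ := by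
  classical
  obtain ⟨hfin, ⟨σ₀, hσ₀⟩, hpoly, hface, hinter⟩ := hΔ
  set V : Set (Fin n → ℝ) := ⋂ τ ∈ Δ, τ with hVdef
  have hVsub : ∀ σ ∈ Δ, V ⊆ σ := fun σ hσ x hx => Set.mem_iInter₂.1 hx σ hσ
  -- Part 2: V is a face of every cone of Δ.
  have hfaceV : ∀ σ ∈ Δ, IsFace V σ := by
    intro σ hσ
    choose! uf hu1 hu2 using fun τ (hτ : τ ∈ Δ) => (hinter σ hσ τ hτ).2
    refine ⟨hVsub σ hσ, ∑ τ ∈ hfin.toFinset, uf τ, ?_, ?_⟩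
    · intro x hx
      rw [LinearMap.sum_apply]
      refine Finset.sum_nonneg fun τ hτ => ?_
      exact hu1 τ (hfin.mem_toFinset.1 hτ) x hx
    · ext x
      simp only [Set.mem_setOf_eq, LinearMap.sum_apply]
      constructor
      · intro hx
        have hxσ : x ∈ σ := hVsub σ hσ hx
        refine ⟨hxσ, Finset.sum_eq_zero fun τ hτ => ?_⟩
        have hτΔ := hfin.mem_toFinset.1 hτ
        have hxστ : x ∈ σ ∩ τ := ⟨hxσ, hVsub τ hτΔ hx⟩
        rw [hu2 τ hτΔ] at hxστ
        exact hxστ.2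
      · rintro ⟨hxσ, hsum⟩
        refine Set.mem_iInter₂.2 fun τ hτΔ => ?_
        have hτ : τ ∈ hfin.toFinset := hfin.mem_toFinset.2 hτΔ
        have hterm : ∀ τ' ∈ hfin.toFinset, uf τ' x = 0 := by
          rw [← Finset.sum_eq_zero_iff_of_nonneg
            (fun τ' hτ' => hu1 τ' (hfin.mem_toFinset.1 hτ') x hxσ)]
          exact hsum
        have : x ∈ σ ∩ τ := by
          rw [hu2 τ hτΔ]
          exact ⟨hxσ, hterm τ hτ⟩
        exact this.2
  -- V belongs to Δ.
  have hVΔ : V ∈ Δ := hface σ₀ hσ₀ V (hfaceV σ₀ hσ₀)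
  -- V is a finitely generated cone.
  obtain ⟨S, hS⟩ := hpoly V hVΔ
  set S' : Finset (Fin n → ℝ) := S.image (fun z => fun i => (z i : ℝ)) with hS'def
  have hVcone : V = coneHull S' := hS
  have hV0 : (0 : Fin n → ℝ) ∈ V := hVcone ▸ coneHull.zero_mem S'
  have hVadd : ∀ x ∈ V, ∀ y ∈ V, x + y ∈ V := by
    rw [hVcone]; exact fun x hx y hy => coneHull.add_mem hx hy
  have hVsmul : ∀ (a : ℝ), 0 ≤ a → ∀ x ∈ V, a • x ∈ V := by
    rw [hVcone]; exact fun a ha x hx => coneHull.smul_mem ha hx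
  have hgen : ∀ v ∈ S', v ∈ V := fun v hv => hVcone ▸ coneHull.mem_of_mem hv
  -- nonnegative combinations of elements of V lie in V
  have hVsum : ∀ (t : Finset (Fin n → ℝ)) (w : (Fin n → ℝ) → ℝ),
      (∀ i ∈ t, 0 ≤ w i) → (∀ i ∈ t, i ∈ V) → ∑ i ∈ t, w i • i ∈ V := by
    intro t
    induction t using Finset.induction with
    | empty => intro w _ _; simpa using hV0
    | insert _ _ hnot ih =>
      intro w hw hmem
      rw [Finset.sum_insert hnot]
      exact hVadd _ (hVsmul _ (hw _ (Finset.mem_insert_self _ _))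
          (_ ) (hmem _ (Finset.mem_insert_self _ _)))
        _ (ih w (fun i hi => hw i (Finset.mem_insert_of_mem hi))
          (fun i hi => hmem i (Finset.mem_insert_of_mem hi)))
  -- (★) every linear form nonnegative on V vanishes on V
  have hstar : ∀ u : Module.Dual ℝ (Fin n → ℝ),
      (∀ x ∈ V, 0 ≤ u x) → ∀ x ∈ V, u x = 0 := by
    intro u hu x hx
    have hF : IsFace {y ∈ V | u y = 0} V := ⟨Set.sep_subset _ _, u, hu, rfl⟩
    have hFΔ : {y ∈ V | u y = 0} ∈ Δ := hface V hVΔ _ hF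
    exact (hVsub _ hFΔ hx).2
  -- the lineality part of V
  let Wlin : Submodule ℝ (Fin n → ℝ) :=
    { carrier := {x | x ∈ V ∧ -x ∈ V}
      add_mem' := fun {a b} ha hb => ⟨hVadd a ha.1 b hb.1, by
        rw [neg_add]; exact hVadd _ ha.2 _ hb.2⟩
      zero_mem' := ⟨hV0, by simpa using hV0⟩
      smul_mem' := by
        intro c x hx
        rcases le_or_gt 0 c with hc | hc
        · exact ⟨hVsmul c hc x hx.1, by rw [← smul_neg]; exact hVsmul c hc _ hx.2⟩
        · have hc' : 0 ≤ -c := by linarith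
          refine ⟨?_, ?_⟩
          · have : c • x = (-c) • (-x) := by rw [neg_smul, smul_neg, neg_neg]
            rw [this]; exact hVsmul _ hc' _ hx.2
          · have : -(c • x) = (-c) • x := by rw [neg_smul]
            rw [this]; exact hVsmul _ hc' _ hx.1 }
  obtain ⟨U, hU⟩ := Submodule.exists_isCompl Wlin
  set π : (Fin n → ℝ) →ₗ[ℝ] (Fin n → ℝ) :=
    U.subtype ∘ₗ U.linearProjOfIsCompl Wlin hU.symm with hπdef
  have hπU : ∀ x, π x ∈ U := fun x => (U.linearProjOfIsCompl Wlin hU.symm x).2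
  have hπW : ∀ x, x - π x ∈ Wlin := by
    intro x
    have h : (Wlin.linearProjOfIsCompl U hU x : Fin n → ℝ) +
        (U.linearProjOfIsCompl Wlin hU.symm x : Fin n → ℝ) = x :=
      Submodule.projection_add_projection_eq_self hU x
    have hb : π x = (U.linearProjOfIsCompl Wlin hU.symm x : Fin n → ℝ) := rfl
    have : x - π x = (Wlin.linearProjOfIsCompl U hU x : Fin n → ℝ) := by
      rw [hb, sub_eq_iff_eq_add]
      exact h.symm
    rw [this]
    exact (Wlin.linearProjOfIsCompl U hU x).2
  have hπVV : ∀ x ∈ V, π x ∈ V := by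
    intro x hx
    have h1 := (hπW x).2
    have : π x = x + -(x - π x) := by abel
    rw [this]
    exact hVadd x hx _ h1
  -- the projected generators
  set T : Finset (Fin n → ℝ) := (S'.image fun v => π v).erase 0 with hTdef
  have hTV : ∀ t ∈ T, t ∈ V := by
    intro t ht
    obtain ⟨v, hv, rfl⟩ := Finset.mem_image.1 (Finset.mem_of_mem_erase ht)
    exact hπVV v (hgen v hv)
  have hTU : ∀ t ∈ T, t ∈ U := by
    intro t ht
    obtain ⟨v, hv, rfl⟩ := Finset.mem_image.1 (Finset.mem_of_mem_erase ht)
    exact hπU v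
  -- 0 is not in the convex hull of T
  have h0T : (0 : Fin n → ℝ) ∉ convexHull ℝ (T : Set (Fin n → ℝ)) := by
    intro h0
    rw [Finset.convexHull_eq] at h0
    obtain ⟨w, hw0, hw1, hwc⟩ := h0
    rw [Finset.centerMass_eq_of_sum_1 _ _ hw1] at hwc
    simp only [id] at hwc
    obtain ⟨t₀, ht₀T, ht₀pos⟩ : ∃ t₀ ∈ T, 0 < w t₀ := by
      by_contra hcon
      push_neg at hcon
      have : ∑ y ∈ T, w y ≤ 0 :=
        Finset.sum_nonpos fun y hy => hcon y hy
      rw [hw1] at this; linarith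
    have hsplit : w t₀ • t₀ + ∑ t ∈ T.erase t₀, w t • t = 0 :=
      (Finset.add_sum_erase T (fun t => w t • t) ht₀T).trans hwc
    have hrest : ∑ t ∈ T.erase t₀, w t • t ∈ V :=
      hVsum _ _ (fun i hi => hw0 i (Finset.mem_of_mem_erase hi))
        (fun i hi => hTV i (Finset.mem_of_mem_erase hi))
    have hnegmem : -(w t₀ • t₀) ∈ V := by
      rw [neg_eq_of_add_eq_zero_right hsplit]; exact hrest
    have hposmem : w t₀ • t₀ ∈ V := hVsmul _ ht₀pos.le _ (hTV t₀ ht₀T)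
    have hWmem : w t₀ • t₀ ∈ Wlin := ⟨hposmem, hnegmem⟩
    have hUmem : w t₀ • t₀ ∈ U := U.smul_mem _ (hTU t₀ ht₀T)
    have : w t₀ • t₀ = 0 := by
      have hd := hU.disjoint
      exact (Submodule.disjoint_def.1 hd) _ hWmem hUmem
    rcases smul_eq_zero.1 this with h | h
    · exact ht₀pos.ne' h
    · exact (Finset.ne_of_mem_erase ht₀T) h
  -- separating functional
  obtain ⟨f, u0, hf0, hfT⟩ := geometric_hahn_banach_point_closed
    (convex_convexHull ℝ (T : Set (Fin n → ℝ)))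
    ((T.finite_toSet.isCompact_convexHull ℝ).isClosed) h0T
  have hu0pos : 0 < u0 := by simpa using hf0
  have hfpos : ∀ t ∈ T, 0 < f t := fun t ht =>
    hu0pos.trans (hfT t (subset_convexHull ℝ _ ht))
  have hfπ : ∀ v ∈ S', 0 ≤ f (π v) := by
    intro v hv
    by_cases h : π v = 0
    · simp [h]
    · exact (hfpos _ (Finset.mem_erase.2 ⟨h, Finset.mem_image_of_mem _ hv⟩)).le
  -- the composed functional is nonnegative on V, hence zero on V
  set g : Module.Dual ℝ (Fin n → ℝ) := f.toLinearMap ∘ₗ π with hgdef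
  have hgrep : ∀ (c : (Fin n → ℝ) → ℝ), g (∑ v ∈ S', c v • v)
      = ∑ v ∈ S', c v * f (π v) := by
    intro c
    simp [hgdef, map_sum, map_smul, smul_eq_mul]
  have hgnonneg : ∀ x ∈ V, 0 ≤ g x := by
    intro x hx
    rw [hVcone] at hx
    obtain ⟨c, hc, rfl⟩ := hx
    rw [hgrep]
    exact Finset.sum_nonneg fun v hv => mul_nonneg (hc v) (hfπ v hv)
  have hgzero : ∀ x ∈ V, g x = 0 := hstar g hgnonneg
  -- conclude: π vanishes on V
  have hπ0 : ∀ x ∈ V, π x = 0 := by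
    intro x hx
    have hx' := hx
    rw [hVcone] at hx'
    obtain ⟨c, hc, hxc⟩ := hx'
    have hz : ∑ v ∈ S', c v * f (π v) = 0 := by
      rw [← hgrep, ← hxc]; exact hgzero x hx
    have hterm : ∀ v ∈ S', c v * f (π v) = 0 :=
      (Finset.sum_eq_zero_iff_of_nonneg
        (fun v hv => mul_nonneg (hc v) (hfπ v hv))).1 hz
    rw [hxc, map_sum]
    refine Finset.sum_eq_zero fun v hv => ?_
    rw [map_smul]
    by_cases h : π v = 0
    · simp [h]
    · have hfv : 0 < f (π v) :=
        hfpos _ (Finset.mem_erase.2 ⟨h, Finset.mem_image_of_mem _ hv⟩)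
      have : c v = 0 := by
        have := hterm v hv
        rcases mul_eq_zero.1 this with h' | h'
        · exact h'
        · exact absurd h' hfv.ne'
      simp [this]
  -- V is closed under negation
  have hneg : ∀ x ∈ V, -x ∈ V := by
    intro x hx
    have : x ∈ Wlin := by
      have := hπW x
      rwa [hπ0 x hx, sub_zero] at this
    exact this.2
  refine ⟨⟨{ carrier := V
             add_mem' := fun {a b} ha hb => hVadd a ha b hb
             zero_mem' := hV0
             smul_mem' := by
               intro c x hx
               rcases le_or_gt 0 c with hc | hc
               · exact hVsmul c hc x hx
               · have : c • x = (-c) • (-x) := by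
                   rw [neg_smul, smul_neg, neg_neg]
                 rw [this]
                 exact hVsmul _ (by linarith) _ (hneg x hx) }, rfl⟩, hfaceV⟩
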